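/- Let G be a finite p-group of maximal class of order at least p^4, and let H be a maximal subgroup of G different from G_1 = C_G(γ_2(G)/γ_4(G)). Then there is no simple virtual endomorphism φ : H → G (i.e., every homomorphism φ : H → G admits a nontrivial subgroup of H that is normal in G and φ-invariant). -/

import Mathlib

open scoped Pointwise

open scoped commutatorElement

local notation "lowerCentralSeries" G:max n:max => Subgroup.lowerCentralSeries (⊤ : Subgroup G) n

section Aux

variable {G : Type} [Group G]

private lemma lcs_succ_eq (n : ℕ) :
    lowerCentralSeries G (n + 1) = ⁅lowerCentralSeries G n, ⊤⁆ := rfl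

private lemma commutator_sup_le_aux {A B C X : Subgroup G} [hX : X.Normal]
    (h1 : ⁅A, C⁆ ≤ X) (h2 : ⁅B, C⁆ ≤ X) : ⁅A ⊔ B, C⁆ ≤ X := by
  apply Subgroup.commutator_le.2
  intro g hg c hc
  rw [Subgroup.sup_eq_closure] at hg
  induction hg using Subgroup.closure_induction with
  | mem x hx =>
    rcases hx with hx | hx
    · exact h1 (Subgroup.commutator_mem_commutator hx hc)
    · exact h2 (Subgroup.commutator_mem_commutator hx hc)
  | one => simpa [commutatorElement_def] using X.one_mem
  | mul x y hx hy px py =>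
    have key : ⁅x * y, c⁆ = (x * ⁅y, c⁆ * x⁻¹) * ⁅x, c⁆ := by
      simp only [commutatorElement_def]; group
    rw [key]
    exact X.mul_mem (hX.conj_mem _ py x) px
  | inv x hx px =>
    have key : ⁅x⁻¹, c⁆ = x⁻¹ * ⁅x, c⁆⁻¹ * x := by
      simp only [commutatorElement_def]; group
    rw [key]
    have := hX.conj_mem _ (X.inv_mem px) x⁻¹
    simpa using this

private lemma sandwich {p : ℕ} (hp : p.Prime) [Finite G]
    {A B C : Subgroup G} (hAB : A ≤ B) (hBC : B ≤ C) (hA : A ≠ B)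
    (hC : Nat.card C ∣ p * Nat.card A) : B = C := by
  obtain ⟨t, ht⟩ := Subgroup.card_dvd_of_le hAB
  have hApos : 0 < Nat.card A := Nat.card_pos
  have htp : t ∣ p := by
    have h1 : Nat.card B ∣ p * Nat.card A := (Subgroup.card_dvd_of_le hBC).trans hC
    rw [ht, mul_comm p] at h1
    exact (Nat.mul_dvd_mul_iff_left hApos).1 h1
  have ht1 : t ≠ 1 := fun h =>
    hA (Subgroup.eq_of_le_of_card_ge hAB (by rw [ht, h, mul_one]))
  have htp' : t = p := (hp.eq_one_or_self_of_dvd t htp).resolve_left ht1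
  have hCB : Nat.card C ∣ Nat.card B := by rw [ht, htp', mul_comm]; exact hC
  exact Subgroup.eq_of_le_of_card_ge hBC (Nat.le_of_dvd Nat.card_pos hCB)

private lemma comm_aux {p : ℕ} (hp : p.Prime) [Finite G] (A : Subgroup G)
    (h1 : lowerCentralSeries G 1 ≤ A)
    (h2 : Nat.card A ∣ p * Nat.card (lowerCentralSeries G 1)) :
    ∀ a ∈ A, ∀ b ∈ A, ⁅a, b⁆ ∈ lowerCentralSeries G 2 := by
  intro a ha b hb
  have h2eq : lowerCentralSeries G 2 = ⁅lowerCentralSeries G 1, ⊤⁆ := lcs_succ_eq 1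
  by_cases hag : a ∈ lowerCentralSeries G 1
  · rw [h2eq]
    exact Subgroup.commutator_mem_commutator hag (Subgroup.mem_top b)
  · set Γ := lowerCentralSeries G 1 with hΓ
    set P := Subgroup.zpowers a ⊔ Γ with hPdef
    have hPA : P ≤ A := sup_le (Subgroup.zpowers_le.2 ha) h1
    have hΓP : Γ ≤ P := le_sup_right
    have haP : a ∈ P := Subgroup.mem_sup_left (Subgroup.mem_zpowers a)
    have hne : Γ ≠ P := by intro heq; rw [heq] at hag; exact hag haP
    have hPA' : P = A := sandwich hp hΓP hPA hne h2
    have hbP : b ∈ P := by rw [hPA']; exact hb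
    have hbP' : b ∈ ((Subgroup.zpowers a : Subgroup G) : Set G) * (Γ : Set G) := by
      rw [← Subgroup.mul_normal]; exact hbP
    obtain ⟨x, hx, u, hu, hxu⟩ := hbP'
    obtain ⟨j, hj⟩ := Subgroup.mem_zpowers_iff.1 hx
    have key : ⁅a, b⁆ = a ^ j * ⁅a, u⁆ * (a ^ j)⁻¹ := by
      rw [← hxu, ← hj]; simp only [commutatorElement_def]; group
    have hu2 : ⁅a, u⁆ ∈ lowerCentralSeries G 2 := by
      rw [h2eq, Subgroup.commutator_comm]
      exact Subgroup.commutator_mem_commutator (Subgroup.mem_top a) hu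
    rw [key]
    exact (Subgroup.lowerCentralSeries_normal ⊤ 2).conj_mem _ hu2 (a ^ j)

private lemma normal_of_index_prime {p : ℕ} (hp : p.Prime)
    (hnc : NormalizerCondition G) {M : Subgroup G} (hM : M.index = p) : M.Normal := by
  have hMne : M ≠ ⊤ := by
    intro h; rw [h, Subgroup.index_top] at hM; exact hp.one_lt.ne hM
  have hlt := hnc M (lt_top_iff_ne_top.2 hMne)
  rw [← Subgroup.normalizer_eq_top_iff]
  have hdvd : (Subgroup.normalizer (M : Set G)).index ∣ p := by
    rw [← hM]; exact Subgroup.index_dvd_of_le Subgroup.le_normalizer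
  rcases hp.eq_one_or_self_of_dvd _ hdvd with h | h
  · exact Subgroup.index_eq_one.1 h
  · exfalso
    have h1 := Subgroup.relIndex_mul_index (Subgroup.le_normalizer (H := M))
    rw [hM, h] at h1
    have h2 : M.relIndex (Subgroup.normalizer (M : Set G)) = 1 :=
      Nat.eq_of_mul_eq_mul_right hp.pos (by rw [h1, one_mul])
    exact hlt.not_ge (Subgroup.relIndex_eq_one.1 h2)

private lemma commutator_le_of_index_prime {p : ℕ} (hp : p.Prime)
    (hnc : NormalizerCondition G) {M : Subgroup G} (hM : M.index = p) :
    lowerCentralSeries G 1 ≤ M := by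
  haveI : Fact p.Prime := ⟨hp⟩
  haveI hnorm : M.Normal := normal_of_index_prime hp hnc hM
  have hq : Nat.card (G ⧸ M) = p := by rw [← Subgroup.index_eq_card, hM]
  haveI : IsCyclic (G ⧸ M) := isCyclic_of_prime_card hq
  letI : CommGroup (G ⧸ M) := IsCyclic.commGroup
  rw [lowerCentralSeries_one, commutator_def]
  apply Subgroup.commutator_le.2
  intro g1 _ g2 _
  rw [← QuotientGroup.eq_one_iff]
  have hmk : ((⁅g1, g2⁆ : G) : G ⧸ M) = ⁅(g1 : G ⧸ M), (g2 : G ⧸ M)⁆ :=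
    map_commutatorElement (QuotientGroup.mk' M) g1 g2
  rw [hmk]
  exact commutatorElement_eq_one_iff_commute.2 (mul_comm _ _)

end Aux

theorem stmt12 {p n : ℕ} (hp : p.Prime) {G : Type} [Group G] [Finite G]
    (hcard : Nat.card G = p ^ n) (hn : 4 ≤ n)
    -- `G` has maximal class, i.e. nilpotency class exactly `n - 1`
    (hmc₁ : Subgroup.lowerCentralSeries (⊤ : Subgroup G) (n - 1) = ⊥) (hmc₂ : Subgroup.lowerCentralSeries (⊤ : Subgroup G) (n - 2) ≠ ⊥)
    -- `G1 = C_G(γ₂(G)/γ₄(G))`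
    (G1 : Subgroup G)
    (hG1 : ∀ g : G, g ∈ G1 ↔
      ∀ x ∈ Subgroup.lowerCentralSeries (⊤ : Subgroup G) 1, ⁅g, x⁆ ∈ Subgroup.lowerCentralSeries (⊤ : Subgroup G) 3)
    (H : Subgroup G) (hHmax : H.index = p) (hH : H ≠ G1) :
    -- there is no simple virtual endomorphism from `H` to `G`
    ∀ φ : H →* G, ∃ K : Subgroup G,
      K ≠ ⊥ ∧ K ≤ H ∧ K.Normal ∧ Subgroup.map φ (K.subgroupOf H) ≤ K := by
  intro φ
  haveI hfp : Fact p.Prime := ⟨hp⟩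
  have hp1 : 1 < p := hp.one_lt
  haveI hnil : Group.IsNilpotent G := nilpotent_iff_lowerCentralSeries.2 ⟨n - 1, hmc₁⟩
  have hnc : NormalizerCondition G := normalizerCondition_of_isNilpotent
  -- every subgroup has p-power order
  have hcardsub : ∀ K : Subgroup G, ∃ e, e ≤ n ∧ Nat.card K = p ^ e := by
    intro K
    have hd : Nat.card K ∣ p ^ n := hcard ▸ Subgroup.card_subgroup_dvd_card K
    obtain ⟨e, he, h⟩ := (Nat.dvd_prime_pow hp).1 hd
    exact ⟨e, he, h⟩
  -- stabilization of the lower central series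
  have hstab : ∀ k, lowerCentralSeries G (k + 1) = lowerCentralSeries G k →
      ∀ j, lowerCentralSeries G (k + j) = lowerCentralSeries G k := by
    intro k hk j
    induction j with
    | zero => rfl
    | succ j ih =>
      have e1 : k + (j + 1) = (k + j) + 1 := by omega
      rw [e1, lcs_succ_eq, ih, ← lcs_succ_eq, hk]
  have hstrict : ∀ k, k ≤ n - 2 → lowerCentralSeries G (k + 1) ≠ lowerCentralSeries G k := by
    intro k hk heq
    apply hmc₂
    have h1 : lowerCentralSeries G (n - 2) = lowerCentralSeries G k := by
      have e1 : n - 2 = k + (n - 2 - k) := by omega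
      rw [e1]; exact hstab k heq _
    have h2 : lowerCentralSeries G (n - 1) = lowerCentralSeries G k := by
      have e2 : n - 1 = k + (n - 1 - k) := by omega
      rw [e2]; exact hstab k heq _
    rw [h1, ← h2, hmc₁]
  -- strict steps give an extra factor p
  have hstep : ∀ k, k ≤ n - 2 →
      p * Nat.card (lowerCentralSeries G (k + 1)) ∣ Nat.card (lowerCentralSeries G k) := by
    intro k hk
    have hlt := hstrict k hk
    have hle : lowerCentralSeries G (k + 1) ≤ lowerCentralSeries G k :=
      lowerCentralSeries_antitone ⊤ (Nat.le_succ k)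
    have hdv := Subgroup.card_dvd_of_le hle
    obtain ⟨e1, _, he1⟩ := hcardsub (lowerCentralSeries G (k + 1))
    obtain ⟨e2, _, he2⟩ := hcardsub (lowerCentralSeries G k)
    rw [he1, he2] at hdv
    have hee : e1 ≤ e2 := (Nat.pow_dvd_pow_iff_le_right hp1).1 hdv
    have hee' : e1 < e2 := by
      rcases hee.lt_or_eq with h | h
      · exact h
      · exfalso
        apply hlt
        exact Subgroup.eq_of_le_of_card_ge hle (by rw [he1, he2, h])
    rw [he1, he2, ← pow_succ']
    exact pow_dvd_pow p hee'
  -- lower bounds on cards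
  have hdvdlow : ∀ i, i ≤ n - 1 → p ^ i ∣ Nat.card (lowerCentralSeries G (n - 1 - i)) := by
    intro i
    induction i with
    | zero => intro _; simp
    | succ i ih =>
      intro hi
      have hk : (n - 1 - (i + 1)) + 1 = n - 1 - i := by omega
      have hkle : n - 1 - (i + 1) ≤ n - 2 := by omega
      have h1 := hstep _ hkle
      rw [hk] at h1
      have h2 := ih (by omega)
      calc p ^ (i + 1) = p * p ^ i := by rw [pow_succ']
        _ ∣ p * Nat.card (lowerCentralSeries G (n - 1 - i)) := Nat.mul_dvd_mul_left p h2
        _ ∣ Nat.card (lowerCentralSeries G (n - 1 - (i + 1))) := by rw [← hk] at h1 ⊢; exact h1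
  -- card of γ₂ = lcs 1
  have hcard1 : Nat.card (lowerCentralSeries G 1) = p ^ (n - 2) := by
    obtain ⟨e, hen, he⟩ := hcardsub (lowerCentralSeries G 1)
    have hlow : p ^ (n - 2) ∣ Nat.card (lowerCentralSeries G 1) := by
      have := hdvdlow (n - 2) (by omega)
      rwa [show n - 1 - (n - 2) = 1 by omega] at this
    have hge : n - 2 ≤ e := (Nat.pow_dvd_pow_iff_le_right hp1).1 (he ▸ hlow)
    rcases Nat.lt_or_ge e (n - 1) with hlt | hge'
    · rw [he]; congr 1; omega
    · exfalso
      have hA : Nat.card (⊤ : Subgroup G) ∣ p * Nat.card (lowerCentralSeries G 1) := by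
        rw [Subgroup.card_top, hcard, he, ← pow_succ']
        exact pow_dvd_pow p (by omega)
      have hcomm := comm_aux hp ⊤ le_top hA
      have h12 : lowerCentralSeries G 2 = lowerCentralSeries G 1 := by
        apply le_antisymm (lowerCentralSeries_antitone ⊤ (by omega))
        have h1eq : lowerCentralSeries G 1 = ⁅(⊤ : Subgroup G), ⊤⁆ := lcs_succ_eq 0
        rw [h1eq]
        exact Subgroup.commutator_le.2
          (fun a _ b _ => hcomm a (Subgroup.mem_top a) b (Subgroup.mem_top b))
      exact hstrict 1 (by omega) h12
  -- card of γ₃ = lcs 2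
  have hcard2 : Nat.card (lowerCentralSeries G 2) = p ^ (n - 3) := by
    have hlow : p ^ (n - 3) ∣ Nat.card (lowerCentralSeries G 2) := by
      have := hdvdlow (n - 3) (by omega)
      rwa [show n - 1 - (n - 3) = 2 by omega] at this
    have hup : Nat.card (lowerCentralSeries G 2) ∣ p ^ (n - 3) := by
      have h1 := hstep 1 (by omega)
      rw [hcard1, show n - 2 = (n - 3) + 1 by omega, pow_succ'] at h1
      exact (Nat.mul_dvd_mul_iff_left hp.pos).1 h1
    exact Nat.dvd_antisymm hup hlow
  -- card of γ₄ = lcs 3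
  have hcard3 : Nat.card (lowerCentralSeries G 3) = p ^ (n - 4) := by
    have hlow : p ^ (n - 4) ∣ Nat.card (lowerCentralSeries G 3) := by
      have := hdvdlow (n - 4) (by omega)
      rwa [show n - 1 - (n - 4) = 3 by omega] at this
    have hup : Nat.card (lowerCentralSeries G 3) ∣ p ^ (n - 4) := by
      have h1 := hstep 2 (by omega)
      rw [hcard2, show n - 3 = (n - 4) + 1 by omega, pow_succ'] at h1
      exact (Nat.mul_dvd_mul_iff_left hp.pos).1 h1
    exact Nat.dvd_antisymm hup hlow
  -- γ₂ ≤ H and H is normal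
  have hγH : lowerCentralSeries G 1 ≤ H := commutator_le_of_index_prime hp hnc hHmax
  haveI hHnorm : H.Normal := normal_of_index_prime hp hnc hHmax
  -- G1 ≠ ⊤
  have hG1top : G1 ≠ ⊤ := by
    intro htop
    have h23 : lowerCentralSeries G 2 ≤ lowerCentralSeries G 3 := by
      rw [lcs_succ_eq, Subgroup.commutator_comm]
      exact Subgroup.commutator_le.2
        (fun g _ x hx => (hG1 g).1 (htop ▸ Subgroup.mem_top g) x hx)
    have h32 : lowerCentralSeries G 3 = lowerCentralSeries G 2 :=
      le_antisymm (lowerCentralSeries_antitone ⊤ (by omega)) h23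
    exact hstrict 2 (by omega) h32
  -- find s ∈ H \ G1
  obtain ⟨s, hsH, hsG1⟩ : ∃ s, s ∈ H ∧ s ∉ G1 := by
    by_contra hcon
    push_neg at hcon
    have hHG1 : H ≤ G1 := hcon
    have h1 := Subgroup.relIndex_mul_index hHG1
    rw [hHmax] at h1
    rcases hp.eq_one_or_self_of_dvd G1.index (Dvd.intro_left _ h1) with h2 | h2
    · exact hG1top (Subgroup.index_eq_one.1 h2)
    · rw [h2] at h1
      have h3 : H.relIndex G1 = 1 :=
        Nat.eq_of_mul_eq_mul_right hp.pos (by rw [h1, one_mul])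
      exact hH (le_antisymm hHG1 (Subgroup.relIndex_eq_one.1 h3))
  -- L = [H, γ₂]
  set L : Subgroup G := ⁅H, lowerCentralSeries G 1⁆ with hLdef
  haveI hLnorm : L.Normal := Subgroup.commutator_normal H (lowerCentralSeries G 1)
  have hLle2 : L ≤ lowerCentralSeries G 2 := by
    rw [show lowerCentralSeries G 2 = ⁅lowerCentralSeries G 1, ⊤⁆ from lcs_succ_eq 1,
      Subgroup.commutator_comm]
    exact Subgroup.commutator_mono le_top le_rfl
  obtain ⟨x, hx, hsx⟩ : ∃ x ∈ lowerCentralSeries G 1, ⁅s, x⁆ ∉ lowerCentralSeries G 3 := by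
    by_contra hcon
    push_neg at hcon
    exact hsG1 ((hG1 s).2 hcon)
  have hsxL : ⁅s, x⁆ ∈ L := Subgroup.commutator_mem_commutator hsH hx
  -- L ⊔ γ₄ = γ₃
  have hN : L ⊔ lowerCentralSeries G 3 = lowerCentralSeries G 2 := by
    have hN2 : L ⊔ lowerCentralSeries G 3 ≤ lowerCentralSeries G 2 :=
      sup_le hLle2 (lowerCentralSeries_antitone ⊤ (by omega))
    have h3N : lowerCentralSeries G 3 ≤ L ⊔ lowerCentralSeries G 3 := le_sup_right
    have hne : lowerCentralSeries G 3 ≠ L ⊔ lowerCentralSeries G 3 := by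
      intro h
      exact hsx (h ▸ (Subgroup.mem_sup_left (Subgroup.commutator_mem_commutator hsH hx) :
        ⁅s, x⁆ ∈ L ⊔ lowerCentralSeries G 3))
    have hC : Nat.card (lowerCentralSeries G 2) ∣ p * Nat.card (lowerCentralSeries G 3) := by
      rw [hcard2, hcard3, ← pow_succ', show (n - 4) + 1 = n - 3 by omega]
    exact sandwich hp h3N hN2 hne hC
  -- γ₃ ≤ L ⊔ γ_{j+1} chain
  have hLsup : ∀ j, lowerCentralSeries G (2 + j) ≤ L ⊔ lowerCentralSeries G (3 + j) := by
    intro j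
    induction j with
    | zero => exact hN.ge
    | succ j ih =>
      have h1 : lowerCentralSeries G (2 + (j + 1)) = ⁅lowerCentralSeries G (2 + j), ⊤⁆ := by
        rw [show 2 + (j + 1) = (2 + j) + 1 by omega]; exact lcs_succ_eq (2 + j)
      rw [h1]
      have h2 : ⁅lowerCentralSeries G (2 + j), ⊤⁆ ≤ ⁅L ⊔ lowerCentralSeries G (3 + j), ⊤⁆ :=
        Subgroup.commutator_mono ih le_rfl
      refine h2.trans (commutator_sup_le_aux ?_ ?_)
      · exact le_sup_left.trans' (by
          rw [Subgroup.commutator_comm]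
          exact Subgroup.commutator_le_right _ _)
      · have h3 : ⁅lowerCentralSeries G (3 + j), ⊤⁆ = lowerCentralSeries G (3 + (j + 1)) := by
          rw [show 3 + (j + 1) = (3 + j) + 1 by omega]; exact (lcs_succ_eq (3 + j)).symm
        rw [h3]
        exact le_sup_right
  have hfin : lowerCentralSeries G 2 ≤ L := by
    have hchain : ∀ j, lowerCentralSeries G 2 ≤ L ⊔ lowerCentralSeries G (2 + j) := by
      intro j
      induction j with
      | zero => exact le_sup_right
      | succ j ih =>
        refine ih.trans (sup_le le_sup_left ?_)
        refine (hLsup j).trans ?_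
        rw [show 3 + j = 2 + (j + 1) by omega]
    have := hchain (n - 3)
    rwa [show 2 + (n - 3) = n - 1 by omega, hmc₁, sup_bot_eq] at this
  -- the image of H is inside a maximal subgroup, whose commutator is in γ₃
  have hHcard : Nat.card H = p ^ (n - 1) := by
    have h1 := Subgroup.card_mul_index H
    rw [hHmax, hcard] at h1
    refine Nat.eq_of_mul_eq_mul_right hp.pos ?_
    rw [h1, ← pow_succ, show (n - 1) + 1 = n by omega]
  have hrange : ⁅φ.range, φ.range⁆ ≤ lowerCentralSeries G 2 := by
    obtain ⟨e, hen, he⟩ := hcardsub φ.range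
    have hrdvd : Nat.card φ.range ∣ Nat.card H :=
      Subgroup.card_dvd_of_surjective φ.rangeRestrict φ.rangeRestrict_surjective
    have hele : e ≤ n - 1 := by
      rw [he, hHcard] at hrdvd
      exact (Nat.pow_dvd_pow_iff_le_right hp1).1 hrdvd
    obtain ⟨M, hMcard, hMle⟩ := Sylow.exists_subgroup_card_pow_prime_le p
      (by rw [hcard]; exact pow_dvd_pow p (by omega)) φ.range he hele
    have hMidx : M.index = p := by
      have h1 := Subgroup.card_mul_index M
      rw [hMcard, hcard] at h1
      refine Nat.eq_of_mul_eq_mul_left (pow_pos hp.pos (n - 1)) ?_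
      rw [h1, ← pow_succ, show (n - 1) + 1 = n by omega]
    have hγM : lowerCentralSeries G 1 ≤ M := commutator_le_of_index_prime hp hnc hMidx
    have hMc : Nat.card M ∣ p * Nat.card (lowerCentralSeries G 1) := by
      rw [hMcard, hcard1, ← pow_succ', show (n - 2) + 1 = n - 1 by omega]
    exact Subgroup.commutator_le.2
      (fun a ha b hb => comm_aux hp M hγM hMc a (hMle ha) b (hMle hb))
  refine ⟨lowerCentralSeries G 2, ?_, ?_, inferInstance, ?_⟩
  · intro hbot
    exact hmc₂ (le_bot_iff.1
      (hbot ▸ lowerCentralSeries_antitone ⊤ (show 2 ≤ n - 2 by omega)))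
  · exact (lowerCentralSeries_antitone ⊤ one_le_two).trans hγH
  · intro y hy
    obtain ⟨x', hx', rfl⟩ := hy
    have hx2 : (x' : G) ∈ lowerCentralSeries G 2 := hx'
    have hxc : (x' : G) ∈ ⁅H, H⁆ :=
      (hfin.trans (Subgroup.commutator_mono le_rfl hγH)) hx2
    have hmapc : (⁅H, H⁆ : Subgroup G) = Subgroup.map H.subtype ⁅(⊤ : Subgroup H), ⊤⁆ := by
      rw [Subgroup.map_commutator, ← MonoidHom.range_eq_map, Subgroup.subtype_range]
    rw [hmapc] at hxc
    obtain ⟨z, hz, hzx⟩ := hxc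
    have hzx' : z = x' := Subtype.ext hzx
    have hφ : φ x' ∈ Subgroup.map φ ⁅(⊤ : Subgroup H), ⊤⁆ := ⟨x', hzx' ▸ hz, rfl⟩
    rw [Subgroup.map_commutator, ← MonoidHom.range_eq_map] at hφ
    exact hrange hφ
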